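/- arXiv:1804.03941 — 2 statements merged into one kernel-verified Lean document; each statement's English description precedes it below -/
import Mathlib

section
/- Let 0 → A → G → B → 0 be a short exact sequence of topological groups in which the surjection π : G → B is a continuous open map, the inclusion A → G is a topological embedding onto ker(π), and both A and B are profinite. Then G is profinite. -/
open Pointwise


/-- If `0 → A → G → B → 0` is a short exact sequence of topological groups, where the
surjection `π : G → B` is continuous and open, the injection `ι : A → G` is a topological
embedding onto `ker π`, and both `A` and `B` are profinite (compact, Hausdorff, totally
disconnected), then `G` is profinite. -/
theorem stmt_3 {A G B : Type*}
    [Group A] [TopologicalSpace A] [IsTopologicalGroup A]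
    [CompactSpace A] [T2Space A] [TotallyDisconnectedSpace A]
    [Group G] [TopologicalSpace G] [IsTopologicalGroup G]
    [Group B] [TopologicalSpace B] [IsTopologicalGroup B]
    [CompactSpace B] [T2Space B] [TotallyDisconnectedSpace B]
    (ι : A →* G) (π : G →* B)
    (hι : Topology.IsEmbedding ι) (hrange : ι.range = π.ker)
    (hπc : Continuous π) (hπo : IsOpenMap π) (hπs : Function.Surjective π) :
    CompactSpace G ∧ T2Space G ∧ TotallyDisconnectedSpace G := by
  -- The kernel of `π`, as a set, is the range of `ι`, hence compact.
  have hKset : (π.ker : Set G) = Set.range ι := by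
    rw [← hrange]; rfl
  have hKcompact : IsCompact (π.ker : Set G) := by
    rw [hKset, ← Set.image_univ]
    exact isCompact_univ.image hι.continuous
  -- The kernel is totally disconnected as a set.
  have hKtd : IsTotallyDisconnected (π.ker : Set G) := by
    rw [hKset]
    exact hι.isTotallyDisconnected_range.mpr inferInstance
  -- `{1}` is closed in `G`, since `A` is T2 and `ker π` is closed.
  have hT2 : T2Space G := by
    rw [IsTopologicalGroup.t2Space_iff_one_closed]
    have hKclosed : IsClosed (π.ker : Set G) :=
      (isClosed_singleton (x := (1 : B))).preimage hπc
    have hranT2 : T2Space (Set.range ι) :=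
      hι.toHomeomorph.symm.isEmbedding.t2Space
    have hsub : ({1} : Set G) ⊆ (π.ker : Set G) := by
      intro x hx
      rw [Set.mem_singleton_iff] at hx
      subst hx
      exact π.ker.one_mem
    have : ({1} : Set G) = Subtype.val '' {x : (π.ker : Set G) | (x : G) ∈ ({1} : Set G)} := by
      ext x
      simp only [Set.mem_image, Set.mem_setOf_eq, Set.mem_singleton_iff]
      constructor
      · rintro rfl; exact ⟨⟨1, hsub rfl⟩, rfl, rfl⟩
      · rintro ⟨y, hy, rfl⟩; exact hy
    rw [this]
    apply hKclosed.isClosedEmbedding_subtypeVal.isClosedMap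
    have : T2Space (π.ker : Set G) := by rw [hKset]; exact hranT2
    have : IsClosed ({x : (π.ker : Set G) | (x : G) = 1}) := by
      have : {x : (π.ker : Set G) | (x : G) = 1} = {(⟨1, hsub rfl⟩ : (π.ker : Set G))} := by
        ext x; rw [Set.mem_setOf_eq, Set.mem_singleton_iff, Subtype.ext_iff]
      rw [this]; exact isClosed_singleton
    simpa using this
  -- `π` is a quotient map.
  have hquot : Topology.IsQuotientMap π := hπo.isQuotientMap hπc hπs
  -- `π` is a closed map.
  have hclosed : IsClosedMap π := by
    intro C hC
    rw [← hquot.isClosed_preimage]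
    have : π ⁻¹' (π '' C) = C * (π.ker : Set G) := by
      ext x
      simp only [Set.mem_preimage, Set.mem_image, Set.mem_mul, SetLike.mem_coe,
        MonoidHom.mem_ker]
      constructor
      · rintro ⟨c, hc, hcx⟩
        exact ⟨c, hc, c⁻¹ * x, by simp [hcx, hπc], by group⟩
      · rintro ⟨c, hc, k, hk, rfl⟩
        exact ⟨c, hc, by simp [hk]⟩
    rw [this]
    exact hC.mul_right_of_isCompact hKcompact
  -- `π` has compact fibers.
  have hfib : ∀ b : B, IsCompact (π ⁻¹' {b}) := by
    intro b
    obtain ⟨g, rfl⟩ := hπs b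
    have : π ⁻¹' {π g} = (fun x => g * x) '' (π.ker : Set G) := by
      ext x
      simp only [Set.mem_preimage, Set.mem_singleton_iff, Set.mem_image, SetLike.mem_coe,
        MonoidHom.mem_ker]
      constructor
      · intro hx
        exact ⟨g⁻¹ * x, by simp [hx], by group⟩
      · rintro ⟨k, hk, rfl⟩
        simp [hk]
    rw [this]
    exact hKcompact.image (continuous_mul_left g)
  -- `π` is proper, hence `G` is compact.
  have hproper : IsProperMap π :=
    isProperMap_iff_isClosedMap_and_compact_fibers.mpr ⟨hπc, hclosed, hfib⟩
  have hcompact : CompactSpace G := by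
    constructor
    have : (Set.univ : Set G) = π ⁻¹' Set.univ := by simp
    rw [this]
    exact hproper.isCompact_preimage isCompact_univ
  -- Totally disconnected: the connected component of `1` is trivial.
  have hcc1 : connectedComponent (1 : G) = {1} := by
    have hsubK : connectedComponent (1 : G) ⊆ (π.ker : Set G) := by
      intro g hg
      have : π g ∈ connectedComponent (π 1) :=
        hπc.image_connectedComponent_subset 1 ⟨g, hg, rfl⟩
      rw [map_one] at this
      rw [connectedComponent_eq_singleton (1 : B)] at this
      simpa [MonoidHom.mem_ker] using this
    have hsing : connectedComponent (1 : G) ⊆ {1} := by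
      have := hKtd (connectedComponent (1 : G)) hsubK
        isPreconnected_connectedComponent
      intro g hg
      exact this hg mem_connectedComponent
    exact hsing.antisymm (Set.singleton_subset_iff.mpr mem_connectedComponent)
  have htd : TotallyDisconnectedSpace G := by
    rw [totallyDisconnectedSpace_iff_connectedComponent_singleton]
    intro x
    apply Set.Subset.antisymm
    · intro y hy
      have : x⁻¹ * y ∈ connectedComponent (x⁻¹ * x) :=
        (continuous_mul_left x⁻¹).image_connectedComponent_subset x ⟨y, hy, rfl⟩
      rw [inv_mul_cancel, hcc1] at this
      have h1 : x⁻¹ * y = 1 := this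
      exact Set.mem_singleton_iff.mpr (inv_mul_eq_one.mp h1).symm
    · exact Set.singleton_subset_iff.mpr mem_connectedComponent
  exact ⟨hcompact, hT2, htd⟩
end

section
/- Let 𝒜 be an abelian category and consider a commutative square of bounded-below cochain complexes f : A → A', α : A → B ⊕ E, α' : A' → B ⊕ E', and (id_B, g) : B ⊕ E → B ⊕ E' with α' ∘ f = (id_B, g) ∘ α. If the induced morphism of mapping cones Cone(f) → Cone(g) is a quasi-isomorphism, then the induced morphism Cone(α) → Cone(α') is a quasi-isomorphism. -/
open CategoryTheory Limits CochainComplex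

namespace StmtSevenAux

open CategoryTheory Category Limits Pretriangulated CochainComplex CochainComplex.mappingCone

variable {C : Type*} [Category C] [Abelian C]

lemma map_add' {K₁ L₁ K₂ L₂ : CochainComplex C ℤ} (φ₁ : K₁ ⟶ L₁) (φ₂ : K₂ ⟶ L₂)
    (a a' : K₁ ⟶ K₂) (b b' : L₁ ⟶ L₂) (c₁ : φ₁ ≫ b = a ≫ φ₂) (c₂ : φ₁ ≫ b' = a' ≫ φ₂) :
    mappingCone.map φ₁ φ₂ (a + a') (b + b')
      (by rw [Preadditive.comp_add, c₁, c₂, ← Preadditive.add_comp]) =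
    mappingCone.map φ₁ φ₂ a b c₁ + mappingCone.map φ₁ φ₂ a' b' c₂ := by
  ext n
  simp [ext_from_iff _ (n + 1) n rfl, mappingCone.map]

section r

variable (B : CochainComplex C ℤ) {E E' : CochainComplex C ℤ} (g : E ⟶ E')

/-- projection from the cone of `biprod.map (𝟙 B) g` to the cone of `g`. -/
noncomputable def rMap : mappingCone (biprod.map (𝟙 B) g) ⟶ mappingCone g :=
  mappingCone.map _ g biprod.snd biprod.snd (by simp)

/-- inclusion of the cone of `g` into the cone of `biprod.map (𝟙 B) g`. -/
noncomputable def sMap : mappingCone g ⟶ mappingCone (biprod.map (𝟙 B) g) :=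
  mappingCone.map g _ biprod.inr biprod.inr (by simp)

lemma sMap_rMap : sMap B g ≫ rMap B g = 𝟙 _ := by
  rw [sMap, rMap, ← mappingCone.map_comp]
  simp only [biprod.inr_snd]
  exact mappingCone.map_id g

/-- projection of the cone of `biprod.map (𝟙 B) g` onto the cone of `𝟙 B`. -/
noncomputable def aMap : mappingCone (biprod.map (𝟙 B) g) ⟶ mappingCone (𝟙 B) :=
  mappingCone.map (biprod.map (𝟙 B) g) (𝟙 B) biprod.fst biprod.fst (by simp)

/-- inclusion of the cone of `𝟙 B` into the cone of `biprod.map (𝟙 B) g`. -/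
noncomputable def bMap : mappingCone (𝟙 B) ⟶ mappingCone (biprod.map (𝟙 B) g) :=
  mappingCone.map (𝟙 B) (biprod.map (𝟙 B) g) biprod.inl biprod.inl (by simp)

noncomputable def homotopy_rMap_sMap : Homotopy (rMap B g ≫ sMap B g) (𝟙 _) := by
  refine Homotopy.equivSubZero.symm ?_
  have hab : Homotopy (aMap B g ≫ bMap B g) 0 := by
    refine Homotopy.trans (Homotopy.ofEq ?_)
      ((((homotopyToZeroOfId B).compRight (bMap B g)).compLeft (aMap B g)).trans
        (Homotopy.ofEq (by simp)))
    rw [← Category.assoc, Category.comp_id]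
  have key : rMap B g ≫ sMap B g - 𝟙 _ = -(aMap B g ≫ bMap B g) := by
    rw [rMap, sMap, aMap, bMap, ← mappingCone.map_comp, ← mappingCone.map_comp]
    have e : mappingCone.map (biprod.map (𝟙 B) g) (biprod.map (𝟙 B) g)
          (biprod.fst ≫ biprod.inl + biprod.snd ≫ biprod.inr)
          (biprod.fst ≫ biprod.inl + biprod.snd ≫ biprod.inr)
          (by rw [Preadditive.comp_add, Preadditive.add_comp]; simp) = 𝟙 _ := by
      simp only [biprod.total]
      exact mappingCone.map_id _
    rw [← e, map_add' (biprod.map (𝟙 B) g) (biprod.map (𝟙 B) g) (biprod.fst ≫ biprod.inl)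
      (biprod.snd ≫ biprod.inr) (biprod.fst ≫ biprod.inl) (biprod.snd ≫ biprod.inr)
      (by simp) (by simp)]
    abel
  rw [key]
  exact (Homotopy.ofEq (by rw [Preadditive.comp_neg, Category.comp_id])).symm.trans
    ((hab.compRight (-𝟙 _)).trans (Homotopy.ofEq (by simp)))

/-- the homotopy equivalence between the two cones -/
noncomputable def coneHomotopyEquiv : HomotopyEquiv (mappingCone (biprod.map (𝟙 B) g))
    (mappingCone g) where
  hom := rMap B g
  inv := sMap B g
  homotopyHomInvId := homotopy_rMap_sMap B g
  homotopyInvHomId := Homotopy.ofEq (sMap_rMap B g)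

instance : QuasiIso (rMap B g) :=
  (inferInstance : QuasiIso (coneHomotopyEquiv B g).hom)

end r

lemma compTriangleh_distinguished [HasZeroObject C] {X₁ X₂ X₃ : CochainComplex C ℤ}
    (f : X₁ ⟶ X₂) (g : X₂ ⟶ X₃) (fg : X₁ ⟶ X₃) (h : f ≫ g = fg) :
    (HomotopyCategory.quotient C (ComplexShape.up ℤ)).mapTriangle.obj
      (Triangle.mk (mappingCone.map f fg (𝟙 X₁) g (by rw [id_comp, h]))
        (mappingCone.map fg g f (𝟙 X₃) (by rw [comp_id, h]))
        ((mappingCone.triangle g).mor₃ ≫ (mappingCone.inr f)⟦(1 : ℤ)⟧')) ∈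
      distTriang (HomotopyCategory C (ComplexShape.up ℤ)) := by
  subst h
  exact HomotopyCategory.mappingConeCompTriangleh_distinguished f g

end StmtSevenAux

open StmtSevenAux

/-- Given a commutative square of bounded-below cochain complexes
`f : A ⟶ A'`, `α : A ⟶ B ⊞ E`, `α' : A' ⟶ B ⊞ E'`, `(id_B, g) : B ⊞ E ⟶ B ⊞ E'`,
if the induced morphism `Cone(f) ⟶ Cone(g)` is a quasi-isomorphism, then the induced
morphism `Cone(α) ⟶ Cone(α')` is a quasi-isomorphism. -/
theorem stmt_7 {𝒜 : Type*} [Category 𝒜] [Abelian 𝒜] [EnoughInjectives 𝒜]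
    (A A' B E E' : CochainComplex 𝒜 ℤ)
    (hA : ∃ n : ℤ, ∀ i < n, IsZero (A.X i)) (hA' : ∃ n : ℤ, ∀ i < n, IsZero (A'.X i))
    (hB : ∃ n : ℤ, ∀ i < n, IsZero (B.X i)) (hE : ∃ n : ℤ, ∀ i < n, IsZero (E.X i))
    (hE' : ∃ n : ℤ, ∀ i < n, IsZero (E'.X i))
    (f : A ⟶ A') (g : E ⟶ E') (α : A ⟶ B ⊞ E) (α' : A' ⟶ B ⊞ E')
    (hcomm : α ≫ biprod.map (𝟙 B) g = f ≫ α')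
    (hqis : QuasiIso (mappingCone.map f g (α ≫ biprod.snd) (α' ≫ biprod.snd)
      (by rw [← Category.assoc, ← hcomm]; simp))) :
    QuasiIso (mappingCone.map α α' f (biprod.map (𝟙 B) g) hcomm) := by
  classical
  letI : HasDerivedCategory 𝒜 := HasDerivedCategory.standard 𝒜
  -- the morphism `Cone f ⟶ Cone (biprod.map (𝟙 B) g)` is a quasi-isomorphism
  have hm' : QuasiIso (mappingCone.map f (biprod.map (𝟙 B) g) α α' hcomm.symm) := by
    have e := mappingCone.map_comp f (biprod.map (𝟙 B) g) g α α' hcomm.symm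
      biprod.snd biprod.snd (by simp)
    have hqis' : QuasiIso (mappingCone.map f (biprod.map (𝟙 B) g) α α' hcomm.symm
        ≫ rMap B g) := by
      rw [rMap, ← e]
      exact hqis
    exact (quasiIso_iff_comp_right _ _).1 hqis'
  -- pass to the derived category
  let Qt := HomotopyCategory.quotient 𝒜 (ComplexShape.up ℤ)
  let Qh := DerivedCategory.Qh (C := 𝒜)
  let u : mappingCone α ⟶ mappingCone (f ≫ α') :=
    mappingCone.map α (f ≫ α') (𝟙 A) (biprod.map (𝟙 B) g) (by rw [Category.id_comp, hcomm])
  let v : mappingCone (f ≫ α') ⟶ mappingCone α' :=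
    mappingCone.map (f ≫ α') α' f (𝟙 _) (by rw [Category.comp_id])
  let u₀ : mappingCone f ⟶ mappingCone (f ≫ α') :=
    mappingCone.map f (f ≫ α') (𝟙 _) α' (by rw [Category.id_comp])
  let v₁ : mappingCone (f ≫ α') ⟶ mappingCone (biprod.map (𝟙 B) g) :=
    mappingCone.map (f ≫ α') (biprod.map (𝟙 B) g) α (𝟙 _) (by rw [Category.comp_id, hcomm])
  let cgoal : mappingCone α ⟶ mappingCone α' :=
    mappingCone.map α α' f (biprod.map (𝟙 B) g) hcomm
  let TI : CategoryTheory.Pretriangulated.Triangle (CochainComplex 𝒜 ℤ) :=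
    CategoryTheory.Pretriangulated.Triangle.mk u v₁
      ((mappingCone.triangle (biprod.map (𝟙 B) g)).mor₃ ≫ (mappingCone.inr α)⟦(1 : ℤ)⟧')
  let TII : CategoryTheory.Pretriangulated.Triangle (CochainComplex 𝒜 ℤ) :=
    CategoryTheory.Pretriangulated.Triangle.mk u₀ v
      ((mappingCone.triangle α').mor₃ ≫ (mappingCone.inr f)⟦(1 : ℤ)⟧')
  have hTI : Qt.mapTriangle.obj TI ∈ distTriang _ :=
    compTriangleh_distinguished α (biprod.map (𝟙 B) g) (f ≫ α') hcomm
  have hTII : Qt.mapTriangle.obj TII ∈ distTriang _ :=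
    compTriangleh_distinguished f α' (f ≫ α') rfl
  have hDTI := Qh.map_distinguished _ hTI
  have hDTII := Qh.map_distinguished _ hTII
  have hrot := CategoryTheory.Pretriangulated.rot_of_distTriang _ hDTII
  obtain ⟨Z, v₁₃, w₁₃, hZT⟩ :=
    CategoryTheory.Pretriangulated.distinguished_cocone_triangle (Qh.map (Qt.map cgoal))
  have comm : Qh.map (Qt.map u) ≫ Qh.map (Qt.map v) = Qh.map (Qt.map cgoal) := by
    rw [← Functor.map_comp, ← Functor.map_comp]
    congr 2
    show u ≫ v = cgoal
    rw [show u ≫ v = mappingCone.map α α' (𝟙 A ≫ f) (biprod.map (𝟙 B) g ≫ 𝟙 _)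
        (by rw [← Category.assoc, hcomm, Category.assoc, Category.comp_id, Category.id_comp])
      from (mappingCone.map_comp _ _ _ _ _ _ _ _ _).symm]
    simp only [Category.id_comp, Category.comp_id]
    rfl
  have O := CategoryTheory.Triangulated.someOctahedron comm hDTI hrot hZT
  have him : IsIso (Qh.map (Qt.map (u₀ ≫ v₁))) := by
    have e : u₀ ≫ v₁ = mappingCone.map f (biprod.map (𝟙 B) g) α α' hcomm.symm := by
      rw [show u₀ ≫ v₁ = mappingCone.map f (biprod.map (𝟙 B) g) (𝟙 A ≫ α) (α' ≫ 𝟙 _)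
          (by rw [← Category.assoc, Category.id_comp, Category.comp_id, hcomm])
        from (mappingCone.map_comp _ _ _ _ _ _ _ _ _).symm]
      simp only [Category.id_comp, Category.comp_id]
    rw [e]
    have h2 : IsIso (DerivedCategory.Q.map
        (mappingCone.map f (biprod.map (𝟙 B) g) α α' hcomm.symm)) := inferInstance
    exact (NatIso.isIso_map_iff (DerivedCategory.quotientCompQhIso 𝒜) _).2 h2
  have hZzero : IsZero Z := by
    refine CategoryTheory.Pretriangulated.Triangle.isZero₂_of_isIso₃ _ O.mem ?_
    show IsIso ((-(Qh.map (Qt.map u₀))⟦(1 : ℤ)⟧') ≫ (Qh.map (Qt.map v₁))⟦(1 : ℤ)⟧')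
    rw [Preadditive.neg_comp, ← Functor.map_comp, ← Functor.map_comp, ← Functor.map_comp]
    have h3 : IsIso ((Qh.map (Qt.map (u₀ ≫ v₁)))⟦(1 : ℤ)⟧') := inferInstance
    rw [show -((Qh.map (Qt.map (u₀ ≫ v₁)))⟦(1 : ℤ)⟧') =
        ((Qh.map (Qt.map (u₀ ≫ v₁)))⟦(1 : ℤ)⟧') ≫ (-𝟙 _) by simp]
    have h4 : IsIso (-𝟙 ((Qh.obj (Qt.obj (mappingCone (biprod.map (𝟙 B) g))))⟦(1 : ℤ)⟧)) :=
      ⟨-𝟙 _, by simp, by simp⟩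
    infer_instance
  have hciso : IsIso (Qh.map (Qt.map cgoal)) :=
    (CategoryTheory.Pretriangulated.Triangle.isZero₃_iff_isIso₁ _ hZT).1 hZzero
  have hq : IsIso (DerivedCategory.Q.map cgoal) :=
    (NatIso.isIso_map_iff (DerivedCategory.quotientCompQhIso 𝒜) cgoal).1 hciso
  have : QuasiIso cgoal := by
    rw [← HomologicalComplex.mem_quasiIso_iff]
    exact (HomologicalComplexUpToQuasiIso.isIso_Q_map_iff_mem_quasiIso cgoal).1 hq
  exact this
end
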